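/- Let A be an evolution algebra with natural basis B and let I be a maximal ideal of A. If e ∈ B \ I, then B = T(e) ∪ H_I, i.e., every basis element e_i either lies in the tree T(e) of e in the associated graph or satisfies e_i² ∈ I. -/

import Mathlib

variable {K ι A : Type*}

section Defs
variable [Field K] [NonUnitalNonAssocCommRing A] [Module K A]
  [SMulCommClass K A A] [IsScalarTower K A A]

/-- A natural basis: distinct basis elements multiply to zero. -/
def IsNaturalBasis (b : Module.Basis ι K A) : Prop := ∀ i j : ι, i ≠ j → b i * b j = 0

/-- Edge i → j in the associated graph: the j-th coordinate of (b i)² is nonzero. -/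
def EvolEdge (b : Module.Basis ι K A) (i j : ι) : Prop := b.repr (b i * b i) j ≠ 0

/-- Hereditary subset of vertices: closed under edges (hence under reachability). -/
def EvolHereditary (b : Module.Basis ι K A) (H : Set ι) : Prop :=
  ∀ i ∈ H, ∀ j, EvolEdge b i j → j ∈ H

/-- Saturated subset: a regular vertex all of whose edge-targets lie in H belongs to H. -/
def EvolSaturated (b : Module.Basis ι K A) (H : Set ι) : Prop :=
  ∀ i : ι, b i * b i ≠ 0 → (∀ j, EvolEdge b i j → j ∈ H) → i ∈ H

/-- Ideal of a (nonunital, nonassociative, commutative) algebra: a submodule absorbing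
multiplication. -/
def IsEvolIdeal (I : Submodule K A) : Prop := ∀ a : A, ∀ x ∈ I, a * x ∈ I

/-- I_H, the span of the basis elements indexed by H. -/
def idealOf (b : Module.Basis ι K A) (H : Set ι) : Submodule K A := Submodule.span K (b '' H)

/-- H_I = {e ∈ B : e² ∈ I}. -/
def hSet (b : Module.Basis ι K A) (I : Submodule K A) : Set ι := {i | b i * b i ∈ I}

/-- Maximal ideal. -/
def IsMaxIdeal (I : Submodule K A) : Prop :=
  IsEvolIdeal I ∧ I ≠ ⊤ ∧
    ∀ J : Submodule K A, IsEvolIdeal J → I ≤ J → J = I ∨ J = ⊤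

/-- Absorption property of an ideal. -/
def Absorption (I : Submodule K A) : Prop := ∀ x : A, (∀ a : A, x * a ∈ I) → x ∈ I

end Defs

/-- A², the span of all products. -/
def sqIdeal (K A : Type*) [Field K] [NonUnitalNonAssocCommRing A] [Module K A] :
    Submodule K A :=
  Submodule.span K {x : A | ∃ a c : A, x = a * c}

variable [Field K] [NonUnitalNonAssocCommRing A] [Module K A]
  [SMulCommClass K A A] [IsScalarTower K A A]

lemma mul_basis_eq (b : Module.Basis ι K A) (hb : IsNaturalBasis b) (a : A) (j : ι) :
    a * b j = b.repr a j • (b j * b j) := by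
  conv_lhs => rw [← b.linearCombination_repr a]
  rw [Finsupp.linearCombination_apply, Finsupp.sum_mul]
  rw [Finsupp.sum_eq_single j (fun l _ hlj => by
    rw [smul_mul_assoc, hb l j hlj, smul_zero]) (by simp)]
  rw [smul_mul_assoc]

theorem stmt12 (b : Module.Basis ι K A) (hb : IsNaturalBasis b) (I : Submodule K A)
    (hI : IsMaxIdeal I) (k : ι) (hk : b k ∉ I) :
    ∀ i : ι, Relation.ReflTransGen (EvolEdge b) k i ∨ i ∈ hSet b I := by
  obtain ⟨hIid, _hItop, hImax⟩ := hI
  set T : Set ι := {j | Relation.ReflTransGen (EvolEdge b) k j} with hTdef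
  have hsq : ∀ j ∈ T, b j * b j ∈ Submodule.span K (b '' T) := by
    intro j hj
    rw [Module.Basis.mem_span_image]
    intro l hl
    exact hj.tail (Finsupp.mem_support_iff.mp hl)
  set J := I ⊔ Submodule.span K (b '' T) with hJdef
  have hJid : IsEvolIdeal J := by
    intro a x hx
    rw [Submodule.mem_sup] at hx ⊢
    obtain ⟨y, hy, z, hz, rfl⟩ := hx
    refine ⟨a * y, hIid a y hy, a * z, ?_, by rw [mul_add]⟩
    induction hz using Submodule.span_induction with
    | mem w hw =>
      obtain ⟨j, hj, rfl⟩ := hw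
      rw [mul_basis_eq b hb a j]
      exact Submodule.smul_mem _ _ (hsq j hj)
    | zero => rw [mul_zero]; exact Submodule.zero_mem _
    | add u v _ _ hu hv => rw [mul_add]; exact Submodule.add_mem _ hu hv
    | smul c u _ hu => rw [mul_smul_comm]; exact Submodule.smul_mem _ _ hu
  have hkJ : b k ∈ J :=
    Submodule.mem_sup_right (Submodule.subset_span ⟨k, Relation.ReflTransGen.refl, rfl⟩)
  have hJtop : J = ⊤ := by
    rcases hImax J hJid le_sup_left with h | h
    · exact absurd (h ▸ hkJ) hk
    · exact h
  intro i
  by_cases hi : Relation.ReflTransGen (EvolEdge b) k i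
  · exact Or.inl hi
  · right
    have hbi : b i ∈ J := hJtop ▸ Submodule.mem_top
    rw [Submodule.mem_sup] at hbi
    obtain ⟨y, hy, z, hz, hyz⟩ := hbi
    have hzi : b.repr z i = 0 := by
      rw [Module.Basis.mem_span_image] at hz
      by_contra h
      exact hi (hz (Finsupp.mem_support_iff.mpr h))
    have hz0 : b i * z = 0 := by
      rw [mul_comm, mul_basis_eq b hb z i, hzi, zero_smul]
    have : b i * b i = b i * y := by
      calc b i * b i = b i * (y + z) := by rw [hyz]
        _ = b i * y + b i * z := mul_add _ _ _
        _ = b i * y := by rw [hz0, add_zero]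
    rw [hSet, Set.mem_setOf_eq, this]
    exact hIid (b i) y hy
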